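/- Define ϑ(a,t) = ((1 − log(at+1)/log(t+1))/(1−a))² for a ≠ 1 and ϑ(1,t) = t²/((t+1)² log²(t+1)), for a,t > 0. Then for each fixed t > 0, the map a ↦ ϑ(a,t) is strictly monotonically decreasing on (0,∞). -/

import Mathlib

open Real Classical

private lemma stmt9_conc (t : ℝ) (ht : 0 < t) :
    StrictConcaveOn ℝ (Set.Ioi (0 : ℝ)) (fun a : ℝ => Real.log (a * t + 1)) := by
  constructor
  · exact convex_Ioi 0
  · intro x hx y hy hxy a b ha hb hab
    have hx' : (0 : ℝ) < x * t + 1 := by have := hx.out; nlinarith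
    have hy' : (0 : ℝ) < y * t + 1 := by have := hy.out; nlinarith
    have hne : x * t + 1 ≠ y * t + 1 := by
      intro h; apply hxy; have : x * t = y * t := by linarith
      exact mul_right_cancel₀ (ne_of_gt ht) this
    have := strictConcaveOn_log_Ioi.2 (Set.mem_Ioi.2 hx') (Set.mem_Ioi.2 hy') hne ha hb hab
    simp only [smul_eq_mul] at this ⊢
    have harg : a * (x * t + 1) + b * (y * t + 1) = (a * x + b * y) * t + 1 := by
      linear_combination hab
    rw [harg] at this
    exact this

private lemma stmt9_deriv (t : ℝ) (ht : 0 < t) :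
    HasDerivAt (fun a : ℝ => Real.log (a * t + 1)) (t / (t + 1)) 1 := by
  have h1 : HasDerivAt (fun a : ℝ => a * t + 1) t 1 := by
    simpa using ((hasDerivAt_id (1:ℝ)).mul_const t).add_const 1
  have h2 : (1:ℝ) * t + 1 ≠ 0 := by nlinarith
  have := h1.log h2
  simpa using this

theorem stmt9
    (t : ℝ) (ht : 0 < t) :
    StrictAntiOn
      (fun a : ℝ => if a = 1
        then t ^ 2 / ((t + 1) ^ 2 * (Real.log (t + 1)) ^ 2)
        else ((1 - Real.log (a * t + 1) / Real.log (t + 1)) / (1 - a)) ^ 2)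
      (Set.Ioi (0 : ℝ)) := by
  set L := Real.log (t + 1) with hLdef
  have hL : 0 < L := Real.log_pos (by linarith)
  set h : ℝ → ℝ := fun a => Real.log (a * t + 1) with hhdef
  have hconc := stmt9_conc t ht
  have hd := stmt9_deriv t ht
  have h1mem : (1 : ℝ) ∈ Set.Ioi (0 : ℝ) := by norm_num
  have hh1 : h 1 = L := by simp [hhdef, hLdef]
  -- G is the slope function
  set G : ℝ → ℝ := fun a => if a = 1 then t / (t + 1) else slope h 1 a with hGdef
  -- G is strictly antitone on Ioi 0
  have hGanti : ∀ a ∈ Set.Ioi (0:ℝ), ∀ b ∈ Set.Ioi (0:ℝ), a < b → G b < G a := by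
    intro a ha b hb hab
    rcases eq_or_ne a 1 with rfl | ha1
    · have hb1 : b ≠ 1 := by exact ne_of_gt hab
      have := hconc.slope_lt_of_hasDerivAt h1mem hb hab hd
      simp only [hGdef, if_pos rfl, if_neg hb1]
      exact this
    · rcases eq_or_ne b 1 with rfl | hb1
      · have := hconc.lt_slope_of_hasDerivAt ha h1mem hab hd
        simp only [hGdef, if_pos rfl, if_neg ha1]
        rw [slope_comm] at this
        exact this
      · have := hconc.secant_strict_mono h1mem ha hb ha1 hb1 hab
        simp only [hGdef, if_neg ha1, if_neg hb1, slope_def_field, hhdef]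
        simpa using this
  -- G is positive on Ioi 0
  have hmono : ∀ x ∈ Set.Ioi (0:ℝ), ∀ y ∈ Set.Ioi (0:ℝ), x < y → h x < h y := by
    intro x hx y hy hxy
    apply Real.log_lt_log
    · have := hx.out; nlinarith
    · have := hxy; nlinarith
  have hGpos : ∀ a ∈ Set.Ioi (0:ℝ), 0 < G a := by
    intro a ha
    rcases eq_or_ne a 1 with rfl | ha1
    · simp only [hGdef, if_pos rfl]; positivity
    · simp only [hGdef, if_neg ha1, slope_def_field]
      rcases lt_or_gt_of_ne ha1 with hlt | hgt
      · have := hmono a ha 1 h1mem hlt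
        apply div_pos_of_neg_of_neg <;> linarith
      · have := hmono 1 h1mem a ha hgt
        apply div_pos <;> linarith
  -- the target function equals (G a)^2 / L^2 on Ioi 0
  have hfun : ∀ a ∈ Set.Ioi (0:ℝ),
      (if a = 1 then t ^ 2 / ((t + 1) ^ 2 * (Real.log (t + 1)) ^ 2)
        else ((1 - Real.log (a * t + 1) / Real.log (t + 1)) / (1 - a)) ^ 2)
      = (G a) ^ 2 / L ^ 2 := by
    intro a ha
    rcases eq_or_ne a 1 with rfl | ha1
    · rw [if_pos rfl]
      simp only [hGdef, if_pos rfl]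
      rw [div_pow, div_div]
    · rw [if_neg ha1]
      simp only [hGdef, if_neg ha1, slope_def_field, hh1, hhdef]
      have ha1' : (1:ℝ) - a ≠ 0 := by
        intro hc; apply ha1; linarith
      have ha1'' : a - 1 ≠ 0 := by intro hc; apply ha1; linarith
      rw [div_pow, div_pow]
      rw [div_eq_div_iff (by positivity) (by positivity)]
      rw [← hLdef]
      have hL' : L ≠ 0 := hL.ne'
      field_simp
      ring
  -- conclude
  intro a ha b hb hab
  simp only
  rw [hfun a ha, hfun b hb]
  have h1 := hGanti a ha b hb hab
  have h2 := hGpos b hb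
  gcongr
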